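/- Let G be an abelian group and f : G → G a group endomorphism. Write S = ⋂_{n≥1} f^n(G) for the intersection of the images of all iterates of f. Assume there exists N₀ ≥ 1 such that for every n ≥ 1, ker(f^n) ⊆ ker(f^{N₀}). Then for every x ∈ S there exists a sequence (x_n)_{n≥0} of elements of S such that x_0 = x and f(x_{n+1}) = x_n for every n ≥ 0. -/
import Mathlib


/-- Lemma L:coherence (group-theoretic form): let `f` be an endomorphism of an
abelian group `G`, `S = ⋂_{n ≥ 1} f^n(G)`, and suppose all kernels of iterates of
`f` are contained in `ker (f^{N₀})` for some `N₀ ≥ 1`. Then every `x ∈ S` admits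
a coherent sequence `(x_n)` in `S` with `x₀ = x` and `f (x_{n+1}) = x_n`. -/
theorem exists_coherent_sequence_in_sharp {G : Type*} [AddCommGroup G] (f : G →+ G)
    (N₀ : ℕ) (hN₀ : 1 ≤ N₀)
    (hker : ∀ n, 1 ≤ n → ∀ y : G, (⇑f)^[n] y = 0 → (⇑f)^[N₀] y = 0) :
    ∀ x ∈ ⋂ n ∈ Set.Ici 1, Set.range ((⇑f)^[n]),
      ∃ u : ℕ → G, u 0 = x ∧ (∀ n, u n ∈ ⋂ n ∈ Set.Ici 1, Set.range ((⇑f)^[n])) ∧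
        ∀ n, f (u (n + 1)) = u n := by
  set S : Set G := ⋂ n ∈ Set.Ici 1, Set.range ((⇑f)^[n]) with hS
  have hmemS : ∀ x : G, x ∈ S ↔ ∀ n, 1 ≤ n → ∃ z, (⇑f)^[n] z = x := by
    intro x
    simp [hS, Set.mem_iInter, Set.mem_range]
  have step : ∀ x ∈ S, ∃ y ∈ S, f y = x := by
    intro x hx
    rw [hmemS] at hx
    obtain ⟨z, hz⟩ := hx (N₀ + 1) (by omega)
    refine ⟨(⇑f)^[N₀] z, ?_, ?_⟩
    · rw [hmemS]
      intro n hn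
      obtain ⟨w, hw⟩ := hx (n + N₀ + 1) (by omega)
      refine ⟨(⇑f)^[N₀] w, ?_⟩
      have hcomp : (⇑f)^[N₀ + 1] ((⇑f)^[n] w) = x := by
        rw [← Function.iterate_add_apply]
        have : N₀ + 1 + n = n + N₀ + 1 := by omega
        rw [this, hw]
      have hk : (⇑f)^[N₀] (z - (⇑f)^[n] w) = 0 := by
        apply hker (N₀ + 1) (by omega)
        rw [iterate_map_sub f, hz, hcomp, sub_self]
      rw [iterate_map_sub f, sub_eq_zero] at hk
      calc (⇑f)^[n] ((⇑f)^[N₀] w) = (⇑f)^[N₀] ((⇑f)^[n] w) := by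
            rw [← Function.iterate_add_apply, ← Function.iterate_add_apply, Nat.add_comm]
        _ = (⇑f)^[N₀] z := hk.symm
    · calc f ((⇑f)^[N₀] z) = (⇑f)^[N₀ + 1] z := (Function.iterate_succ_apply' (⇑f) N₀ z).symm
        _ = x := hz
  intro x hx
  have key : ∀ p : {y // y ∈ S}, ∃ q : {y // y ∈ S}, f q.1 = p.1 := by
    rintro ⟨y, hy⟩
    obtain ⟨z, hzS, hfz⟩ := step y hy
    exact ⟨⟨z, hzS⟩, hfz⟩
  choose g hg using key
  refine ⟨fun n => (g^[n] ⟨x, hx⟩).1, rfl, fun n => (g^[n] ⟨x, hx⟩).2, fun n => ?_⟩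
  show f (g^[n + 1] ⟨x, hx⟩).1 = (g^[n] ⟨x, hx⟩).1
  rw [Function.iterate_succ_apply']
  exact hg _
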